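/- In the two-state counterexample, IBU cannot represent a belief collapse: suppose U = {u⁰, u¹} with a transition function δ such that δ(u¹, σ) = u¹ for all σ (u¹ is absorbing). If the IBU belief at time t satisfies ũ_t(u¹) = 1/2, then for any abstraction output M_t ∈ Δ(Σ), the updated belief satisfies ũ_{t+1}(u¹) ≥ 1/2. In particular, the updated belief cannot assign probability 1 to u⁰. -/
import Mathlib


/-- Two-state counterexample: with `true` (u¹) absorbing and current IBU belief
1/2 on u¹, any IBU update keeps at least 1/2 mass on u¹; in particular the
updated belief cannot be a point mass on u⁰ (`false`). -/
theorem ibu_cannot_collapse {Sg : Type*} [Fintype Sg]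
    (δ : Bool → Sg → Bool) (habs : ∀ s, δ true s = true)
    (b : Bool → ℝ) (hb0 : ∀ u, 0 ≤ b u) (hb1 : b false + b true = 1)
    (hhalf : b true = 1 / 2)
    (m : Sg → ℝ) (hm0 : ∀ s, 0 ≤ m s) (hm1 : ∑ s : Sg, m s = 1)
    (b' : Bool → ℝ)
    (hb' : ∀ u, b' u =
      ∑ s : Sg, ∑ u' : Bool, (if δ u' s = u then (1 : ℝ) else 0) * b u' * m s) :
    1 / 2 ≤ b' true ∧ b' false ≠ 1 := by
  have hbf : b false = 1 / 2 := by linarith [hb1, hhalf]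
  have htrue : 1 / 2 ≤ b' true := by
    rw [hb' true]
    calc (1:ℝ)/2 = ∑ s : Sg, b true * m s := by
          rw [← Finset.mul_sum, hm1, mul_one, hhalf]
      _ ≤ _ := by
          apply Finset.sum_le_sum
          intro s _
          rw [Fintype.sum_bool, habs s]
          simp only [if_pos rfl]
          split_ifs with h <;> nlinarith [hm0 s, hb0 true, hb0 false, mul_nonneg (hb0 false) (hm0 s)]
  refine ⟨htrue, ?_⟩
  have hfalse : b' false ≤ 1 / 2 := by
    rw [hb' false]
    calc ∑ s : Sg, ∑ u' : Bool, (if δ u' s = false then (1:ℝ) else 0) * b u' * m s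
        ≤ ∑ s : Sg, b false * m s := by
          apply Finset.sum_le_sum
          intro s _
          rw [Fintype.sum_bool, habs s]
          simp only [reduceCtorEq, if_false]
          split_ifs with h <;> nlinarith [hm0 s, hb0 false, mul_nonneg (hb0 false) (hm0 s)]
      _ = 1 / 2 := by rw [← Finset.mul_sum, hm1, mul_one, hbf]
  linarith
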